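/- There exists a constant C > 0 such that for all integers k ≥ 1 and ℓ ≥ 1 with ℓ ≥ 2·√k, the number of vectors s = (s₁, …, s_ℓ) of nonnegative integers satisfying Σ_{i=1}^{ℓ} s_i + 2·Σ_{1 ≤ i < j ≤ ℓ} min(s_i, s_j) < k is at most (ℓ/√k)^{C·√k} · e^{C·√k}. -/

import Mathlib

open Finset

namespace CountExpansionAux


lemma testBit_ge {n b : ℕ} (h : n.testBit b = true) : 2 ^ b ≤ n := by
  by_contra hlt
  rw [Nat.testBit_eq_false_of_lt (Nat.lt_of_not_le hlt)] at h
  exact Bool.false_ne_true h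

lemma sum_product_min {l : ℕ} (E : Finset (Fin l)) (f : Fin l → ℕ) :
    ∑ p ∈ E ×ˢ E, min (f p.1) (f p.2)
      = (∑ i ∈ E, f i)
        + 2 * ∑ p ∈ (E ×ˢ E).filter (fun p => p.1 < p.2), min (f p.1) (f p.2) := by
  classical
  have hsplit := Finset.sum_filter_add_sum_filter_not (E ×ˢ E)
      (fun p : Fin l × Fin l => p.1 = p.2) (fun p => min (f p.1) (f p.2))
  have hdiagset : (E ×ˢ E).filter (fun p : Fin l × Fin l => p.1 = p.2)
      = E.image (fun i => (i, i)) := by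
    ext p
    simp only [Finset.mem_filter, Finset.mem_product, Finset.mem_image]
    constructor
    · rintro ⟨⟨h1, _⟩, h3⟩
      exact ⟨p.1, h1, by rw [Prod.ext_iff]; exact ⟨rfl, h3⟩⟩
    · rintro ⟨i, hi, rfl⟩
      exact ⟨⟨hi, hi⟩, rfl⟩
  have hdiag : ∑ p ∈ (E ×ˢ E).filter (fun p : Fin l × Fin l => p.1 = p.2),
      min (f p.1) (f p.2) = ∑ i ∈ E, f i := by
    rw [hdiagset, Finset.sum_image (by intro a _ b _ hab; simpa [Prod.ext_iff] using hab)]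
    simp
  have hnesplit : (E ×ˢ E).filter (fun p : Fin l × Fin l => ¬ p.1 = p.2)
      = (E ×ˢ E).filter (fun p => p.1 < p.2) ∪ (E ×ˢ E).filter (fun p => p.2 < p.1) := by
    rw [← Finset.filter_or]
    apply Finset.filter_congr
    intro p _
    constructor
    · intro h; exact lt_or_gt_of_ne h
    · intro h; exact ne_iff_lt_or_gt.mpr h
  have hdisj : Disjoint ((E ×ˢ E).filter (fun p : Fin l × Fin l => p.1 < p.2))
      ((E ×ˢ E).filter (fun p => p.2 < p.1)) := by
    rw [Finset.disjoint_left]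
    intro p hp hq
    rw [Finset.mem_filter] at hp hq
    exact absurd hq.2 (lt_asymm hp.2)
  have hswap : ∑ p ∈ (E ×ˢ E).filter (fun p : Fin l × Fin l => p.2 < p.1),
        min (f p.1) (f p.2)
      = ∑ p ∈ (E ×ˢ E).filter (fun p : Fin l × Fin l => p.1 < p.2),
        min (f p.1) (f p.2) := by
    apply Finset.sum_bij' (fun p _ => Prod.swap p) (fun p _ => Prod.swap p)
    · intro p hp
      rw [Finset.mem_filter] at hp ⊢
      rw [Finset.mem_product] at hp ⊢
      exact ⟨⟨hp.1.2, hp.1.1⟩, hp.2⟩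
    · intro p hp
      rw [Finset.mem_filter] at hp ⊢
      rw [Finset.mem_product] at hp ⊢
      exact ⟨⟨hp.1.2, hp.1.1⟩, hp.2⟩
    · intro p _; simp
    · intro p _; simp
    · intro p _; exact min_comm _ _
  rw [← hsplit, hdiag, hnesplit, Finset.sum_union hdisj, hswap]
  ring

lemma card_bound (k l : ℕ) :
    ({s : Fin l → ℕ |
        (∑ i, s i) +
          2 * ∑ p ∈ Finset.univ.filter (fun p : Fin l × Fin l => p.1 < p.2),
                min (s p.1) (s p.2) < k}).ncard
      ≤ ∏ b : Fin k, (Finset.univ.filter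
            (fun E : Finset (Fin l) => E.card ^ 2 * 2 ^ (b : ℕ) < k)).card := by
  classical
  set Q : (Fin l → ℕ) → ℕ := fun s =>
    (∑ i, s i) + 2 * ∑ p ∈ Finset.univ.filter (fun p : Fin l × Fin l => p.1 < p.2),
      min (s p.1) (s p.2) with hQ
  set S : Set (Fin l → ℕ) := {s | Q s < k} with hS
  set T := Fintype.piFinset (fun b : Fin k =>
      Finset.univ.filter (fun E : Finset (Fin l) => E.card ^ 2 * 2 ^ (b : ℕ) < k)) with hT
  set Φ : (Fin l → ℕ) → (Fin k → Finset (Fin l)) :=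
      fun s b => Finset.univ.filter (fun i => (s i).testBit (b : ℕ)) with hΦ
  have key : ∀ (s : Fin l → ℕ) (b : ℕ),
      (Finset.univ.filter (fun i => (s i).testBit b)).card ^ 2 * 2 ^ b ≤ Q s := by
    intro s b
    set E := Finset.univ.filter (fun i => (s i).testBit b) with hE
    have hEmem : ∀ i ∈ E, 2 ^ b ≤ s i := by
      intro i hi
      rw [hE, Finset.mem_filter] at hi
      exact testBit_ge (by simpa using hi.2)
    have h1 : (E ×ˢ E).card • 2 ^ b ≤ ∑ p ∈ E ×ˢ E, min (s p.1) (s p.2) := by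
      apply Finset.card_nsmul_le_sum
      intro p hp
      rw [Finset.mem_product] at hp
      exact le_min (hEmem _ hp.1) (hEmem _ hp.2)
    have h2 : ∑ p ∈ E ×ˢ E, min (s p.1) (s p.2) ≤ Q s := by
      rw [sum_product_min]
      apply add_le_add
      · exact Finset.sum_le_sum_of_subset (Finset.subset_univ E)
      · apply Nat.mul_le_mul_left
        apply Finset.sum_le_sum_of_subset
        apply Finset.filter_subset_filter
        exact Finset.subset_univ _
    calc E.card ^ 2 * 2 ^ b = (E ×ˢ E).card • 2 ^ b := by
          rw [Finset.card_product, smul_eq_mul, sq]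
      _ ≤ ∑ p ∈ E ×ˢ E, min (s p.1) (s p.2) := h1
      _ ≤ Q s := h2
  have hmaps : ∀ s ∈ S, Φ s ∈ T := by
    intro s hs
    rw [hT, Fintype.mem_piFinset]
    intro b
    rw [Finset.mem_filter]
    exact ⟨Finset.mem_univ _, lt_of_le_of_lt (key s b) hs⟩
  have hsl : ∀ s ∈ S, ∀ i, s i < k := by
    intro s hs i
    have h1 : s i ≤ ∑ j, s j :=
      Finset.single_le_sum (fun _ _ => Nat.zero_le _) (Finset.mem_univ i)
    exact lt_of_le_of_lt (le_trans h1 (Nat.le_add_right _ _)) hs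
  have hinj : Set.InjOn Φ S := by
    intro s hs s' hs' h
    funext i
    apply Nat.eq_of_testBit_eq
    intro n
    by_cases hn : n < k
    · have hb := congrFun h (⟨n, hn⟩ : Fin k)
      have : (i ∈ Finset.univ.filter (fun j => (s j).testBit n)) ↔
          (i ∈ Finset.univ.filter (fun j => (s' j).testBit n)) := by
        exact Finset.ext_iff.mp hb i
      simp only [Finset.mem_filter, Finset.mem_univ, true_and] at this
      by_cases h1 : (s i).testBit n = true
      · rw [h1, (this.mp (by simp [h1]))]
      · have h1' : (s i).testBit n = false := by
          cases hx : (s i).testBit n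
          · rfl
          · exact absurd hx h1
        have h2' : (s' i).testBit n = false := by
          cases hx : (s' i).testBit n
          · rfl
          · exact absurd (this.mpr (by simp [hx])) (by simp [h1'])
        rw [h1', h2']
    · have hk2 : k ≤ 2 ^ n := le_trans (Nat.le_of_lt (Nat.lt_two_pow_self (n := k)))
        (Nat.pow_le_pow_right (by norm_num) (Nat.le_of_not_lt hn))
      rw [Nat.testBit_eq_false_of_lt (lt_of_lt_of_le (hsl s hs i) hk2),
        Nat.testBit_eq_false_of_lt (lt_of_lt_of_le (hsl s' hs' i) hk2)]
  calc S.ncard = (Φ '' S).ncard := (Set.ncard_image_of_injOn hinj).symm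
    _ ≤ (↑T : Set (Fin k → Finset (Fin l))).ncard := by
        apply Set.ncard_le_ncard
        · rintro x ⟨s, hs, rfl⟩
          exact hmaps s hs
        · exact (↑T : Set (Fin k → Finset (Fin l))).toFinite
    _ = T.card := Set.ncard_coe_finset T
    _ = ∏ b : Fin k, (Finset.univ.filter
          (fun E : Finset (Fin l) => E.card ^ 2 * 2 ^ (b : ℕ) < k)).card := by
        rw [hT, Fintype.card_piFinset]



lemma count_filter_le (k b l : ℕ) (hk : 1 ≤ k) :
    (Finset.univ.filter (fun E : Finset (Fin l) => E.card ^ 2 * 2 ^ b < k)).card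
      ≤ ∑ e ∈ Finset.range (Nat.sqrt ((k - 1) / 2 ^ b) + 1), l.choose e := by
  classical
  set m := Nat.sqrt ((k - 1) / 2 ^ b) with hm
  have hsub : Finset.univ.filter (fun E : Finset (Fin l) => E.card ^ 2 * 2 ^ b < k)
      ⊆ (Finset.range (m + 1)).biUnion
          (fun e => Finset.powersetCard e (Finset.univ : Finset (Fin l))) := by
    intro E hE
    rw [Finset.mem_filter] at hE
    have hcard : E.card ≤ m := by
      rw [hm, Nat.le_sqrt]
      rw [Nat.le_div_iff_mul_le (by positivity)]
      have := hE.2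
      rw [sq] at this
      omega
    rw [Finset.mem_biUnion]
    exact ⟨E.card, Finset.mem_range.mpr (Nat.lt_succ_of_le hcard),
      Finset.mem_powersetCard_univ.mpr rfl⟩
  calc (Finset.univ.filter (fun E : Finset (Fin l) => E.card ^ 2 * 2 ^ b < k)).card
      ≤ ((Finset.range (m + 1)).biUnion
          (fun e => Finset.powersetCard e (Finset.univ : Finset (Fin l)))).card :=
        Finset.card_le_card hsub
    _ ≤ ∑ e ∈ Finset.range (m + 1),
          (Finset.powersetCard e (Finset.univ : Finset (Fin l))).card :=
        Finset.card_biUnion_le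
    _ = ∑ e ∈ Finset.range (m + 1), l.choose e := by
        apply Finset.sum_congr rfl
        intro e _
        rw [Finset.card_powersetCard, Finset.card_univ, Fintype.card_fin]

lemma sum_choose_le (l m : ℕ) :
    ∑ e ∈ Finset.range (m + 1), l.choose e ≤ (l + m).choose m := by
  rw [Nat.add_choose_eq, Finset.Nat.sum_antidiagonal_eq_sum_range_succ_mk]
  apply Finset.sum_le_sum
  intro e he
  have h1 : 0 < m.choose (m - e) := Nat.choose_pos (Nat.sub_le _ _)
  exact Nat.le_mul_of_pos_right _ h1

lemma pow_self_le_factorial_mul_exp (m : ℕ) :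
    (m : ℝ) ^ m ≤ (m.factorial : ℝ) * Real.exp m := by
  induction m with
  | zero => simp
  | succ n ih =>
    have hstep : ((n : ℝ) + 1) ^ n ≤ (n : ℝ) ^ n * Real.exp 1 := by
      rcases Nat.eq_zero_or_pos n with h0 | hpos
      · subst h0; simp [Real.one_le_exp]
      · have hn0 : (0 : ℝ) < n := by exact_mod_cast hpos
        have h1 : (n : ℝ) + 1 ≤ (n : ℝ) * Real.exp (1 / n) := by
          have := Real.add_one_le_exp (1 / (n : ℝ))
          calc (n : ℝ) + 1 = (n : ℝ) * (1 / n + 1) := by field_simp; ring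
            _ ≤ (n : ℝ) * Real.exp (1 / n) := by
                apply mul_le_mul_of_nonneg_left this (le_of_lt hn0)
        calc ((n : ℝ) + 1) ^ n ≤ ((n : ℝ) * Real.exp (1 / n)) ^ n := by
              apply pow_le_pow_left₀ (by positivity) h1
          _ = (n : ℝ) ^ n * Real.exp (1 / n) ^ n := by rw [mul_pow]
          _ = (n : ℝ) ^ n * Real.exp 1 := by
              rw [← Real.exp_nat_mul]
              congr 1
              field_simp
    calc ((n + 1 : ℕ) : ℝ) ^ (n + 1) = ((n : ℝ) + 1) * ((n : ℝ) + 1) ^ n := by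
          push_cast; ring
      _ ≤ ((n : ℝ) + 1) * ((n : ℝ) ^ n * Real.exp 1) := by
          apply mul_le_mul_of_nonneg_left hstep (by positivity)
      _ ≤ ((n : ℝ) + 1) * ((n.factorial : ℝ) * Real.exp n * Real.exp 1) := by
          apply mul_le_mul_of_nonneg_left _ (by positivity)
          apply mul_le_mul_of_nonneg_right ih (le_of_lt (Real.exp_pos 1))
      _ = (((n + 1) * n.factorial : ℕ) : ℝ) * Real.exp (n + 1) := by
          rw [show ((n:ℝ) + 1) = (n:ℝ) + 1 from rfl, Real.exp_add]
          push_cast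
          ring
      _ = (((n + 1).factorial : ℕ) : ℝ) * Real.exp ((n + 1 : ℕ) : ℝ) := by
          rw [Nat.factorial_succ]
          push_cast
          ring



lemma sqrt_pow_aux (x : ℝ) (hx : 0 ≤ x) (b : ℕ) :
    Real.sqrt (x ^ b) = (Real.sqrt x) ^ b := by
  have h : ((Real.sqrt x) ^ b) ^ 2 = x ^ b := by
    rw [← pow_mul, mul_comm, pow_mul, Real.sq_sqrt hx]
  rw [← h, Real.sqrt_sq (pow_nonneg (Real.sqrt_nonneg x) b)]

lemma geom_aux (r : ℝ) (h0 : 0 ≤ r) (h1 : r < 1) (n : ℕ) :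
    ∑ i ∈ Finset.range n, r ^ i ≤ 1 / (1 - r) := by
  have hne : r ≠ 1 := ne_of_lt h1
  have h2 : 0 < 1 - r := by linarith
  rw [geom_sum_eq hne, ← neg_div_neg_eq, neg_sub, neg_sub]
  have h3 : 0 ≤ r ^ n := pow_nonneg h0 n
  gcongr
  linarith

lemma log_le_two_sqrt (x : ℝ) (hx : 0 < x) : Real.log x ≤ 2 * Real.sqrt x := by
  have h1 : Real.log (Real.sqrt x) = Real.log x / 2 := Real.log_sqrt (le_of_lt hx)
  have h2 : Real.log (Real.sqrt x) ≤ Real.sqrt x - 1 :=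
    Real.log_le_sub_one_of_pos (Real.sqrt_pos.mpr hx)
  nlinarith [Real.sqrt_nonneg x]

lemma per_b (k l : ℕ) (hk : 1 ≤ k) (hl : 1 ≤ l)
    (hkl : 2 * Real.sqrt k ≤ (l : ℝ)) (b : ℕ) :
    ((Finset.univ.filter (fun E : Finset (Fin l) => E.card ^ 2 * 2 ^ b < k)).card : ℝ)
      ≤ Real.exp (Real.sqrt k * (2 + Real.log ((l : ℝ) / Real.sqrt k)) * ((Real.sqrt 2)⁻¹) ^ b
          + 2 * Real.sqrt k * (Real.sqrt ((Real.sqrt 2)⁻¹)) ^ b) := by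
  classical
  set κ := Real.sqrt k with hκdef
  set θ : ℝ := (Real.sqrt 2)⁻¹ with hθdef
  set η : ℝ := Real.sqrt θ with hηdef
  set L := Real.log ((l : ℝ) / κ) with hLdef
  have hκ1 : 1 ≤ κ := by
    rw [hκdef, show (1:ℝ) = Real.sqrt 1 by rw [Real.sqrt_one]]
    exact Real.sqrt_le_sqrt (by exact_mod_cast hk)
  have hκpos : 0 < κ := lt_of_lt_of_le one_pos hκ1
  have hsqrt2 : (1.4 : ℝ) ≤ Real.sqrt 2 := by
    rw [show (1.4 : ℝ) = Real.sqrt (1.4 ^ 2) by rw [Real.sqrt_sq (by norm_num)]]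
    exact Real.sqrt_le_sqrt (by norm_num)
  have hθpos : 0 < θ := by
    rw [hθdef]
    exact inv_pos.mpr (lt_of_lt_of_le (by norm_num) hsqrt2)
  have hθle : θ ≤ 5 / 7 := by
    rw [hθdef, inv_le_comm₀ (lt_of_lt_of_le (by norm_num) hsqrt2) (by norm_num)]
    calc (5 / 7 : ℝ)⁻¹ = 7 / 5 := by norm_num
      _ ≤ 1.4 := by norm_num
      _ ≤ Real.sqrt 2 := hsqrt2
  have hηpos : 0 < η := Real.sqrt_pos.mpr hθpos
  have hθη : η ^ 2 = θ := by rw [hηdef, Real.sq_sqrt (le_of_lt hθpos)]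
  have hlpos : (0 : ℝ) < l := by exact_mod_cast hl
  have hL0 : 0 ≤ L := by
    rw [hLdef]
    apply Real.log_nonneg
    rw [le_div_iff₀ hκpos]
    linarith
  have hgpos : 0 ≤ κ * (2 + L) * θ ^ b + 2 * κ * η ^ b := by positivity
  set m := Nat.sqrt ((k - 1) / 2 ^ b) with hmdef
  have hmθ : (m : ℝ) ≤ κ * θ ^ b := by
    have h2 : m ^ 2 ≤ (k - 1) / 2 ^ b := Nat.sqrt_le' _
    have h1 : (m : ℝ) ^ 2 ≤ (k : ℝ) / 2 ^ b := by
      have h3 : ((((k : ℕ) - 1) / 2 ^ b : ℕ) : ℝ) ≤ (((k : ℕ) - 1 : ℕ) : ℝ) / (2 ^ b : ℝ) := by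
        exact_mod_cast Nat.cast_div_le
      have h4 : (((k : ℕ) - 1 : ℕ) : ℝ) ≤ (k : ℝ) := by
        exact_mod_cast Nat.sub_le k 1
      have h5 : (0 : ℝ) < (2 : ℝ) ^ b := by positivity
      calc (m : ℝ) ^ 2 = ((m ^ 2 : ℕ) : ℝ) := by push_cast; ring
        _ ≤ ((((k : ℕ) - 1) / 2 ^ b : ℕ) : ℝ) := by exact_mod_cast h2
        _ ≤ (((k : ℕ) - 1 : ℕ) : ℝ) / (2 ^ b : ℝ) := h3
        _ ≤ (k : ℝ) / 2 ^ b := by gcongr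
    have h6 : (m : ℝ) ≤ Real.sqrt ((k : ℝ) / 2 ^ b) :=
      (Real.le_sqrt (Nat.cast_nonneg m) (by positivity)).mpr h1
    calc (m : ℝ) ≤ Real.sqrt ((k : ℝ) / 2 ^ b) := h6
      _ = Real.sqrt k / Real.sqrt ((2 : ℝ) ^ b) := Real.sqrt_div (Nat.cast_nonneg k) _
      _ = κ * θ ^ b := by
          rw [sqrt_pow_aux 2 (by norm_num) b, hθdef, hκdef, div_eq_mul_inv, inv_pow]
  have hθb1 : θ ^ b ≤ 1 := pow_le_one₀ (le_of_lt hθpos) (le_of_lt (by linarith : θ < 1))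
  have hmκ : (m : ℝ) ≤ κ := le_trans hmθ (by nlinarith)
  -- main case split
  rcases Nat.eq_zero_or_pos m with hm0 | hmpos
  · -- m = 0 : at most one set (the empty set)
    have hcard : (Finset.univ.filter (fun E : Finset (Fin l) => E.card ^ 2 * 2 ^ b < k)).card
        ≤ 1 := by
      calc _ ≤ ∑ e ∈ Finset.range (m + 1), l.choose e := count_filter_le k b l hk
        _ = 1 := by rw [hm0]; simp
    calc ((Finset.univ.filter (fun E : Finset (Fin l) => E.card ^ 2 * 2 ^ b < k)).card : ℝ)
        ≤ 1 := by exact_mod_cast hcard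
      _ ≤ Real.exp _ := Real.one_le_exp hgpos
  · have hmR : (0 : ℝ) < m := by exact_mod_cast hmpos
    have hmll : (m : ℝ) ≤ l := by
      calc (m : ℝ) ≤ κ := hmκ
        _ ≤ l := by linarith
    have hnat : (Finset.univ.filter (fun E : Finset (Fin l) => E.card ^ 2 * 2 ^ b < k)).card
        ≤ (l + m).choose m := le_trans (count_filter_le k b l hk) (sum_choose_le l m)
    have hfact := pow_self_le_factorial_mul_exp m
    have hfactpos : (0 : ℝ) < (m.factorial : ℝ) := by exact_mod_cast m.factorial_pos
    have step1 : ((l + m).choose m : ℝ) ≤ ((l : ℝ) + m) ^ m / m.factorial := by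
      have := Nat.choose_le_pow_div (α := ℝ) m (l + m)
      calc ((l + m).choose m : ℝ) ≤ ((l + m : ℕ) : ℝ) ^ m / m.factorial := this
        _ = ((l : ℝ) + m) ^ m / m.factorial := by push_cast; ring
    have step2 : ((l : ℝ) + m) ^ m / m.factorial ≤ (2 * l / m) ^ m * Real.exp m := by
      have hb1 : ((l : ℝ) + m) ^ m ≤ (2 * l) ^ m := by
        apply pow_le_pow_left₀ (by positivity)
        linarith
      have hb2 : ((l : ℝ) + m) ^ m / m.factorial ≤ (2 * l) ^ m / m.factorial := by
        gcongr
      refine le_trans hb2 ?_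
      have hinv : (1 : ℝ) / m.factorial ≤ Real.exp m / (m : ℝ) ^ m := by
        rw [div_le_div_iff₀ hfactpos (by positivity)]
        calc 1 * (m : ℝ) ^ m = (m : ℝ) ^ m := one_mul _
          _ ≤ m.factorial * Real.exp m := hfact
          _ = Real.exp m * m.factorial := by ring
      calc (2 * (l : ℝ)) ^ m / m.factorial = (2 * (l : ℝ)) ^ m * (1 / m.factorial) := by ring
        _ ≤ (2 * (l : ℝ)) ^ m * (Real.exp m / (m : ℝ) ^ m) := by
            apply mul_le_mul_of_nonneg_left hinv (by positivity)
        _ = (2 * l / m) ^ m * Real.exp m := by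
            rw [div_pow]; ring
    have h2lm : (0 : ℝ) < 2 * l / m := by positivity
    have hpow : Real.exp ((m : ℝ) * Real.log (2 * l / m)) = (2 * (l : ℝ) / m) ^ m := by
      rw [Real.exp_nat_mul, Real.exp_log h2lm]
    have hlogsplit : Real.log (2 * (l : ℝ) / m) = Real.log 2 + L + Real.log (κ / m) := by
      rw [show 2 * (l : ℝ) / m = 2 * ((l : ℝ) / κ) * (κ / m) by field_simp]
      rw [Real.log_mul (by positivity) (ne_of_gt (by positivity)),
        Real.log_mul (by norm_num) (ne_of_gt (by positivity)), hLdef]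
    have h2 : (m : ℝ) * Real.log (κ / m) ≤ 2 * κ * η ^ b := by
      have hκm : (0 : ℝ) < κ / m := by positivity
      have ha : Real.log (κ / m) ≤ 2 * Real.sqrt (κ / m) := log_le_two_sqrt _ hκm
      have hb : (m : ℝ) * Real.sqrt (κ / m) = Real.sqrt ((m : ℝ) * κ) := by
        rw [show (m : ℝ) * κ = (m : ℝ) ^ 2 * (κ / m) by field_simp]
        rw [Real.sqrt_mul (by positivity), Real.sqrt_sq (by positivity)]
      have hc : Real.sqrt ((m : ℝ) * κ) ≤ κ * η ^ b := by
        have hd : (m : ℝ) * κ ≤ (κ ^ 2) * θ ^ b := by nlinarith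
        calc Real.sqrt ((m : ℝ) * κ) ≤ Real.sqrt ((κ ^ 2) * θ ^ b) := Real.sqrt_le_sqrt hd
          _ = κ * η ^ b := by
              rw [Real.sqrt_mul (by positivity), Real.sqrt_sq (le_of_lt hκpos),
                sqrt_pow_aux θ (le_of_lt hθpos), hηdef]
      calc (m : ℝ) * Real.log (κ / m) ≤ (m : ℝ) * (2 * Real.sqrt (κ / m)) := by
            apply mul_le_mul_of_nonneg_left ha (by positivity)
        _ = 2 * ((m : ℝ) * Real.sqrt (κ / m)) := by ring
        _ = 2 * Real.sqrt ((m : ℝ) * κ) := by rw [hb]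
        _ ≤ 2 * (κ * η ^ b) := by linarith
        _ = 2 * κ * η ^ b := by ring
    have h1 : (m : ℝ) * (Real.log 2 + L) + m ≤ κ * θ ^ b * (2 + L) := by
      have hlog2 : Real.log 2 ≤ 1 := by
        have := Real.log_le_sub_one_of_pos (by norm_num : (0 : ℝ) < 2)
        linarith
      have hlog2' : 0 ≤ Real.log 2 := Real.log_nonneg (by norm_num)
      have heq : (m : ℝ) * (Real.log 2 + L) + m = m * (1 + Real.log 2 + L) := by ring
      rw [heq]
      calc (m : ℝ) * (1 + Real.log 2 + L) ≤ (κ * θ ^ b) * (1 + Real.log 2 + L) := by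
            apply mul_le_mul_of_nonneg_right hmθ (by linarith)
        _ ≤ (κ * θ ^ b) * (2 + L) := by
            apply mul_le_mul_of_nonneg_left (by linarith) (by positivity)
    have hmain : (m : ℝ) * Real.log (2 * l / m) + m
        ≤ κ * (2 + L) * θ ^ b + 2 * κ * η ^ b := by
      rw [hlogsplit]
      have hexpand : (m : ℝ) * (Real.log 2 + L + Real.log (κ / m)) + m
          = ((m : ℝ) * (Real.log 2 + L) + m) + m * Real.log (κ / m) := by ring
      rw [hexpand]
      have : κ * θ ^ b * (2 + L) = κ * (2 + L) * θ ^ b := by ring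
      linarith [h1, h2]
    calc ((Finset.univ.filter (fun E : Finset (Fin l) => E.card ^ 2 * 2 ^ b < k)).card : ℝ)
        ≤ ((l + m).choose m : ℝ) := by exact_mod_cast hnat
      _ ≤ ((l : ℝ) + m) ^ m / m.factorial := step1
      _ ≤ (2 * l / m) ^ m * Real.exp m := step2
      _ = Real.exp ((m : ℝ) * Real.log (2 * l / m) + m) := by
          rw [Real.exp_add, hpow]
      _ ≤ Real.exp (κ * (2 + L) * θ ^ b + 2 * κ * η ^ b) := Real.exp_le_exp.mpr hmain


lemma sum_g_le (k l : ℕ) (hk : 1 ≤ k) (hl : 1 ≤ l)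
    (hkl : 2 * Real.sqrt k ≤ (l : ℝ)) :
    ∑ b : Fin k, (Real.sqrt k * (2 + Real.log ((l : ℝ) / Real.sqrt k)) * ((Real.sqrt 2)⁻¹) ^ (b : ℕ)
        + 2 * Real.sqrt k * (Real.sqrt ((Real.sqrt 2)⁻¹)) ^ (b : ℕ))
      ≤ 21 * Real.sqrt k * Real.log ((l : ℝ) / Real.sqrt k) + 21 * Real.sqrt k := by
  set κ := Real.sqrt k with hκdef
  set θ : ℝ := (Real.sqrt 2)⁻¹ with hθdef
  set η : ℝ := Real.sqrt θ with hηdef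
  set L := Real.log ((l : ℝ) / κ) with hLdef
  have hκ1 : 1 ≤ κ := by
    rw [hκdef, show (1:ℝ) = Real.sqrt 1 by rw [Real.sqrt_one]]
    exact Real.sqrt_le_sqrt (by exact_mod_cast hk)
  have hκpos : 0 < κ := lt_of_lt_of_le one_pos hκ1
  have hsqrt2 : (1.4 : ℝ) ≤ Real.sqrt 2 := by
    rw [show (1.4 : ℝ) = Real.sqrt (1.4 ^ 2) by rw [Real.sqrt_sq (by norm_num)]]
    exact Real.sqrt_le_sqrt (by norm_num)
  have hθpos : 0 < θ := by
    rw [hθdef]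
    exact inv_pos.mpr (lt_of_lt_of_le (by norm_num) hsqrt2)
  have hθle : θ ≤ 5 / 7 := by
    rw [hθdef, inv_le_comm₀ (lt_of_lt_of_le (by norm_num) hsqrt2) (by norm_num)]
    calc (5 / 7 : ℝ)⁻¹ = 7 / 5 := by norm_num
      _ ≤ 1.4 := by norm_num
      _ ≤ Real.sqrt 2 := hsqrt2
  have hηpos : 0 < η := Real.sqrt_pos.mpr hθpos
  have hηle : η ≤ 6 / 7 := by
    rw [hηdef]
    calc Real.sqrt θ ≤ Real.sqrt (36 / 49) := Real.sqrt_le_sqrt (by linarith)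
      _ = 6 / 7 := by
          rw [show (36 / 49 : ℝ) = (6 / 7) ^ 2 by norm_num]
          exact Real.sqrt_sq (by norm_num)
  have hL0 : 0 ≤ L := by
    rw [hLdef]
    apply Real.log_nonneg
    rw [le_div_iff₀ hκpos]
    linarith
  have hθsum : ∑ b : Fin k, θ ^ (b : ℕ) ≤ 7 / 2 := by
    rw [Fin.sum_univ_eq_sum_range (fun i => θ ^ i) k]
    calc ∑ i ∈ Finset.range k, θ ^ i ≤ 1 / (1 - θ) :=
          geom_aux θ (le_of_lt hθpos) (by linarith) k
      _ ≤ 7 / 2 := by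
          rw [div_le_div_iff₀ (by linarith) (by norm_num)]
          linarith
  have hηsum : ∑ b : Fin k, η ^ (b : ℕ) ≤ 7 := by
    rw [Fin.sum_univ_eq_sum_range (fun i => η ^ i) k]
    calc ∑ i ∈ Finset.range k, η ^ i ≤ 1 / (1 - η) :=
          geom_aux η (le_of_lt hηpos) (by linarith) k
      _ ≤ 7 := by
          rw [div_le_iff₀ (by linarith)]
          linarith
  have hsplit : ∑ b : Fin k, (κ * (2 + L) * θ ^ (b : ℕ) + 2 * κ * η ^ (b : ℕ))
      = κ * (2 + L) * (∑ b : Fin k, θ ^ (b : ℕ)) + 2 * κ * (∑ b : Fin k, η ^ (b : ℕ)) := by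
    rw [Finset.sum_add_distrib, ← Finset.mul_sum, ← Finset.mul_sum]
  rw [hsplit]
  have h1 : κ * (2 + L) * (∑ b : Fin k, θ ^ (b : ℕ)) ≤ κ * (2 + L) * (7 / 2) := by
    apply mul_le_mul_of_nonneg_left hθsum (by positivity)
  have h2 : 2 * κ * (∑ b : Fin k, η ^ (b : ℕ)) ≤ 2 * κ * 7 := by
    apply mul_le_mul_of_nonneg_left hηsum (by positivity)
  have h3 : κ * (2 + L) * (7 / 2) + 2 * κ * 7 ≤ 21 * κ * L + 21 * κ := by
    have : 0 ≤ κ * L := by positivity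
    nlinarith
  linarith

end CountExpansionAux

/-- There is a constant `C > 0` such that for all `k, ℓ ≥ 1` with `ℓ ≥ 2√k`, the number
of vectors `s : Fin ℓ → ℕ` with `∑ᵢ sᵢ + 2·∑_{i<j} min(sᵢ,sⱼ) < k` is at most
`(ℓ/√k)^{C√k} · e^{C√k}`. -/
theorem count_expansion_vectors :
    ∃ C : ℝ, 0 < C ∧ ∀ k l : ℕ, 1 ≤ k → 1 ≤ l → 2 * Real.sqrt k ≤ (l : ℝ) →
      (({s : Fin l → ℕ |
          (∑ i, s i) +
            2 * ∑ p ∈ Finset.univ.filter (fun p : Fin l × Fin l => p.1 < p.2),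
                  min (s p.1) (s p.2) < k}).ncard : ℝ) ≤
        ((l : ℝ) / Real.sqrt k) ^ (C * Real.sqrt k) * Real.exp (C * Real.sqrt k) := by
  classical
  refine ⟨21, by norm_num, ?_⟩
  intro k l hk hl hkl
  have hκ1 : 1 ≤ Real.sqrt k := by
    rw [show (1:ℝ) = Real.sqrt 1 by rw [Real.sqrt_one]]
    exact Real.sqrt_le_sqrt (by exact_mod_cast hk)
  have hκpos : (0 : ℝ) < Real.sqrt k := lt_of_lt_of_le one_pos hκ1
  have hdivpos : (0 : ℝ) < (l : ℝ) / Real.sqrt k := by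
    apply div_pos _ hκpos
    exact_mod_cast Nat.lt_of_lt_of_le Nat.zero_lt_one hl
  have hcast : (({s : Fin l → ℕ |
      (∑ i, s i) +
        2 * ∑ p ∈ Finset.univ.filter (fun p : Fin l × Fin l => p.1 < p.2),
              min (s p.1) (s p.2) < k}).ncard : ℝ)
      ≤ ∏ b : Fin k, ((Finset.univ.filter
          (fun E : Finset (Fin l) => E.card ^ 2 * 2 ^ (b : ℕ) < k)).card : ℝ) := by
    rw [← Nat.cast_prod]
    exact_mod_cast CountExpansionAux.card_bound k l
  have hprod : ∏ b : Fin k, ((Finset.univ.filter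
        (fun E : Finset (Fin l) => E.card ^ 2 * 2 ^ (b : ℕ) < k)).card : ℝ)
      ≤ ∏ b : Fin k, Real.exp
          (Real.sqrt k * (2 + Real.log ((l : ℝ) / Real.sqrt k)) * ((Real.sqrt 2)⁻¹) ^ (b : ℕ)
            + 2 * Real.sqrt k * (Real.sqrt ((Real.sqrt 2)⁻¹)) ^ (b : ℕ)) := by
    apply Finset.prod_le_prod
    · intro b _
      positivity
    · intro b _
      exact CountExpansionAux.per_b k l hk hl hkl (b : ℕ)
  have hexp : ∏ b : Fin k, Real.exp
        (Real.sqrt k * (2 + Real.log ((l : ℝ) / Real.sqrt k)) * ((Real.sqrt 2)⁻¹) ^ (b : ℕ)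
          + 2 * Real.sqrt k * (Real.sqrt ((Real.sqrt 2)⁻¹)) ^ (b : ℕ))
      = Real.exp (∑ b : Fin k,
          (Real.sqrt k * (2 + Real.log ((l : ℝ) / Real.sqrt k)) * ((Real.sqrt 2)⁻¹) ^ (b : ℕ)
            + 2 * Real.sqrt k * (Real.sqrt ((Real.sqrt 2)⁻¹)) ^ (b : ℕ))) :=
    (Real.exp_sum _ _).symm
  have hsum := CountExpansionAux.sum_g_le k l hk hl hkl
  have hrhs : ((l : ℝ) / Real.sqrt k) ^ ((21 : ℝ) * Real.sqrt k) * Real.exp (21 * Real.sqrt k)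
      = Real.exp (21 * Real.sqrt k * Real.log ((l : ℝ) / Real.sqrt k) + 21 * Real.sqrt k) := by
    rw [Real.rpow_def_of_pos hdivpos, ← Real.exp_add]
    ring_nf
  calc (({s : Fin l → ℕ |
      (∑ i, s i) +
        2 * ∑ p ∈ Finset.univ.filter (fun p : Fin l × Fin l => p.1 < p.2),
              min (s p.1) (s p.2) < k}).ncard : ℝ)
      ≤ ∏ b : Fin k, ((Finset.univ.filter
          (fun E : Finset (Fin l) => E.card ^ 2 * 2 ^ (b : ℕ) < k)).card : ℝ) := hcast
    _ ≤ ∏ b : Fin k, Real.exp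
          (Real.sqrt k * (2 + Real.log ((l : ℝ) / Real.sqrt k)) * ((Real.sqrt 2)⁻¹) ^ (b : ℕ)
            + 2 * Real.sqrt k * (Real.sqrt ((Real.sqrt 2)⁻¹)) ^ (b : ℕ)) := hprod
    _ = Real.exp (∑ b : Fin k,
          (Real.sqrt k * (2 + Real.log ((l : ℝ) / Real.sqrt k)) * ((Real.sqrt 2)⁻¹) ^ (b : ℕ)
            + 2 * Real.sqrt k * (Real.sqrt ((Real.sqrt 2)⁻¹)) ^ (b : ℕ))) := hexp
    _ ≤ Real.exp (21 * Real.sqrt k * Real.log ((l : ℝ) / Real.sqrt k) + 21 * Real.sqrt k) :=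
        Real.exp_le_exp.mpr hsum
    _ = ((l : ℝ) / Real.sqrt k) ^ ((21 : ℝ) * Real.sqrt k) * Real.exp (21 * Real.sqrt k) :=
        hrhs.symm
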